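/- (Row-vector KP R-matrix.) For real numbers p_i,q_i,p_j,q_j with p_j ≠ q_i and p_i ≠ q_j, define R̃(p_i,q_i;p_j,q_j) as the 2×2 matrix with rows ((q_j−q_i)/(p_j−q_i), (p_j−q_j)/(p_j−q_i)) and ((p_i−q_i)/(p_j−q_i), (p_j−p_i)/(p_j−q_i)), and let R(p_i,q_i;p_j,q_j) be the 2×2 matrix with rows ((p_i−p_j)/(p_i−q_j), (p_i−q_i)/(p_i−q_j)) and ((p_j−q_j)/(p_i−q_j), (q_i−q_j)/(p_i−q_j)). Then R̃(p_i,q_i;p_j,q_j) = R(q_i,p_i;q_j,p_j)ᵀ. Moreover, for parameters p₁,p₂,p₃,q₁,q₂,q₃ with p_j ≠ q_i for all i < j, the 3×3 matrices r̃_{ij} obtained by embedding R̃(p_i,q_i;p_j,q_j) into the identity at rows and columns i,j satisfy the Yang-Baxter equation r̃_{12} r̃_{13} r̃_{23} = r̃_{23} r̃_{13} r̃_{12}. -/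

import Mathlib

open Matrix
set_option maxHeartbeats 4000000

/-- The vector KP R-matrix `R(p_i,q_i;p_j,q_j)`. -/
noncomputable def Rmat (pi qi pj qj : ℝ) : Matrix (Fin 2) (Fin 2) ℝ :=
  !![(pi - pj) / (pi - qj), (pi - qi) / (pi - qj);
     (pj - qj) / (pi - qj), (qi - qj) / (pi - qj)]

/-- The row-vector KP R-matrix `R̃(p_i,q_i;p_j,q_j)`. -/
noncomputable def Rtilde (pi qi pj qj : ℝ) : Matrix (Fin 2) (Fin 2) ℝ :=
  !![(qj - qi) / (pj - qi), (pj - qj) / (pj - qi);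
     (pi - qi) / (pj - qi), (pj - pi) / (pj - qi)]

/-- Embedding of a 2×2 matrix into the 3×3 identity at rows/columns `1,2`. -/
noncomputable def emb12 (B : Matrix (Fin 2) (Fin 2) ℝ) : Matrix (Fin 3) (Fin 3) ℝ :=
  !![B 0 0, B 0 1, 0; B 1 0, B 1 1, 0; 0, 0, 1]

/-- Embedding of a 2×2 matrix into the 3×3 identity at rows/columns `1,3`. -/
noncomputable def emb13 (B : Matrix (Fin 2) (Fin 2) ℝ) : Matrix (Fin 3) (Fin 3) ℝ :=
  !![B 0 0, 0, B 0 1; 0, 1, 0; B 1 0, 0, B 1 1]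

/-- Embedding of a 2×2 matrix into the 3×3 identity at rows/columns `2,3`. -/
noncomputable def emb23 (B : Matrix (Fin 2) (Fin 2) ℝ) : Matrix (Fin 3) (Fin 3) ℝ :=
  !![1, 0, 0; 0, B 0 0, B 0 1; 0, B 1 0, B 1 1]

/-- `R̃(p_i,q_i;p_j,q_j) = R(q_i,p_i;q_j,p_j)ᵀ`, and the Yang–Baxter equation for the
row-vector KP R-matrix. -/
theorem stmt_13 (pi qi pj qj : ℝ) (hij : pj ≠ qi) (hji : pi ≠ qj)
    (p₁ p₂ p₃ q₁ q₂ q₃ : ℝ)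
    (h12 : p₂ ≠ q₁) (h13 : p₃ ≠ q₁) (h23 : p₃ ≠ q₂) :
    Rtilde pi qi pj qj = (Rmat qi pi qj pj)ᵀ ∧
    emb12 (Rtilde p₁ q₁ p₂ q₂) * emb13 (Rtilde p₁ q₁ p₃ q₃) * emb23 (Rtilde p₂ q₂ p₃ q₃)
      = emb23 (Rtilde p₂ q₂ p₃ q₃) * emb13 (Rtilde p₁ q₁ p₃ q₃)
        * emb12 (Rtilde p₁ q₁ p₂ q₂) := by
  constructor
  · have h1 : pj - qi ≠ 0 := sub_ne_zero.mpr hij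
    have h2 : qi - pj ≠ 0 := fun h => h1 (by linarith [sub_eq_zero.mp h])
    ext i j
    fin_cases i <;> fin_cases j <;>
      simp [Rtilde, Rmat] <;> field_simp <;> ring
  · have d12 : p₂ - q₁ ≠ 0 := sub_ne_zero.mpr h12
    have d13 : p₃ - q₁ ≠ 0 := sub_ne_zero.mpr h13
    have d23 : p₃ - q₂ ≠ 0 := sub_ne_zero.mpr h23
    simp only [Rtilde, emb12, emb13, emb23, Matrix.cons_val_zero, Matrix.cons_val_one,
      Matrix.head_cons, Matrix.head_fin_const, Matrix.cons_val_fin_one, Matrix.of_apply,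
      Matrix.cons_val', Matrix.empty_val', Matrix.cons_val_fin_one]
    rw [Matrix.mul_fin_three, Matrix.mul_fin_three, Matrix.mul_fin_three, Matrix.mul_fin_three]
    ext i j
    fin_cases i <;> fin_cases j <;>
      simp only [Matrix.cons_val_zero, Matrix.cons_val_one, Matrix.head_cons,
        Matrix.of_apply, Matrix.cons_val', Matrix.empty_val', Matrix.cons_val_fin_one,
        Matrix.head_fin_const, Fin.isValue, Matrix.cons_val_two, Matrix.tail_cons,
          Matrix.cons_val, Fin.reduceFinMk] <;>
      field_simp <;> ring
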